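/- Let 0 < θ₁, θ₂ < π/2 with θ₁ ≠ θ₂, let ω₁ ≠ ω₂ be real numbers, let t ≠ 0 be real, and define ρ_j = v_j v_j* where v_j = (cos θ_j, sin θ_j e^{−iω_j t}) for j = 1,2, and ρ₃ = diag(1,0), ρ₄ = diag(0,1). If additionally e^{i(ω₂−ω₁)t} ∉ ℝ, then ρ₁, ρ₂, ρ₃, ρ₄ are linearly independent over ℝ in the space of 2×2 Hermitian matrices. -/

import Mathlib

open Matrix

/-- The Weinberg-evolved pure qubit state `v v*` with
`v = (cos θ, sin θ · e^{-iωt})`. -/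
noncomputable def weinbergState (θ ω t : ℝ) : Matrix (Fin 2) (Fin 2) ℂ :=
  vecMulVec ![(Real.cos θ : ℂ), (Real.sin θ : ℂ) * Complex.exp (-Complex.I * ω * t)]
    (star ![(Real.cos θ : ℂ), (Real.sin θ : ℂ) * Complex.exp (-Complex.I * ω * t)])

lemma ws01 (θ ω t : ℝ) : weinbergState θ ω t 0 1
    = (Real.cos θ : ℂ) * Real.sin θ * Complex.exp (Complex.I * ω * t) := by
  simp only [weinbergState, vecMulVec_apply, Pi.star_apply, Matrix.cons_val_zero,
    Matrix.cons_val_one, Matrix.head_cons, star_mul', Complex.star_def, ← Complex.exp_conj,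
    _root_.map_mul, map_neg, Complex.conj_I, Complex.conj_ofReal]
  ring_nf

lemma ws00 (θ ω t : ℝ) : weinbergState θ ω t 0 0 = (Real.cos θ : ℂ) * Real.cos θ := by
  simp only [weinbergState, vecMulVec_apply, Pi.star_apply, Matrix.cons_val_zero,
    Complex.star_def, Complex.conj_ofReal]

lemma ws11 (θ ω t : ℝ) : weinbergState θ ω t 1 1 = (Real.sin θ : ℂ) * Real.sin θ := by
  simp only [weinbergState, vecMulVec_apply, Pi.star_apply, Matrix.cons_val_one,
    Matrix.head_cons, Matrix.cons_val_zero, star_mul', Complex.star_def, ← Complex.exp_conj, _root_.map_mul,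
    map_neg, Complex.conj_I, Complex.conj_ofReal]
  rw [mul_mul_mul_comm, ← Complex.exp_add]
  ring_nf
  simp

theorem stmt_15 (θ₁ θ₂ ω₁ ω₂ t : ℝ)
    (h₁ : 0 < θ₁) (h₁' : θ₁ < Real.pi / 2)
    (h₂ : 0 < θ₂) (h₂' : θ₂ < Real.pi / 2)
    (hθ : θ₁ ≠ θ₂) (hω : ω₁ ≠ ω₂) (ht : t ≠ 0)
    (hph : (Complex.exp (Complex.I * (ω₂ - ω₁) * t)).im ≠ 0) :
    LinearIndependent ℝ
      ![weinbergState θ₁ ω₁ t, weinbergState θ₂ ω₂ t,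
        (!![1, 0; 0, 0] : Matrix (Fin 2) (Fin 2) ℂ),
        (!![0, 0; 0, 1] : Matrix (Fin 2) (Fin 2) ℂ)] := by
  have pi2 : Real.pi / 2 < Real.pi := by linarith [Real.pi_pos]
  have hc₁ : 0 < Real.cos θ₁ := Real.cos_pos_of_mem_Ioo ⟨by linarith [Real.pi_pos], h₁'⟩
  have hc₂ : 0 < Real.cos θ₂ := Real.cos_pos_of_mem_Ioo ⟨by linarith [Real.pi_pos], h₂'⟩
  have hs₁ : 0 < Real.sin θ₁ := Real.sin_pos_of_pos_of_lt_pi h₁ (by linarith)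
  have hs₂ : 0 < Real.sin θ₂ := Real.sin_pos_of_pos_of_lt_pi h₂ (by linarith)
  rw [Fintype.linearIndependent_iff]
  intro g hg
  simp only [Fin.sum_univ_four, Matrix.cons_val_zero, Matrix.cons_val_one, Matrix.head_cons,
    Matrix.cons_val_two, Matrix.tail_cons, Matrix.cons_val_three] at hg
  have e01 := congrFun (congrFun hg 0) 1
  have e00 := congrFun (congrFun hg 0) 0
  have e11 := congrFun (congrFun hg 1) 1
  simp only [Matrix.add_apply, Matrix.smul_apply, Matrix.zero_apply, ws01, ws00, ws11,
    Matrix.cons_val', Matrix.cons_val_zero, Matrix.cons_val_one, Matrix.head_cons,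
    Matrix.empty_val', Matrix.cons_val_fin_one, Matrix.head_fin_const, Matrix.of_apply,
    Complex.real_smul, smul_eq_mul, mul_one, mul_zero, add_zero, zero_add] at e01 e00 e11
  set z := Complex.exp (Complex.I * (ω₂ - ω₁) * t) with hz
  have hE : Complex.exp (Complex.I * ω₂ * t)
      = z * Complex.exp (Complex.I * ω₁ * t) := by
    rw [hz, ← Complex.exp_add]; ring_nf
  rw [hE] at e01
  have key : ((g 0 : ℂ) * (Real.cos θ₁ * Real.sin θ₁)
      + (g 1 : ℂ) * (Real.cos θ₂ * Real.sin θ₂) * z) = 0 := by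
    have hne := Complex.exp_ne_zero (Complex.I * ω₁ * t)
    have : ((g 0 : ℂ) * (Real.cos θ₁ * Real.sin θ₁)
        + (g 1 : ℂ) * (Real.cos θ₂ * Real.sin θ₂) * z)
        * Complex.exp (Complex.I * ω₁ * t) = 0 := by
      rw [← e01]; ring
    rcases mul_eq_zero.mp this with h | h
    · exact h
    · exact absurd h hne
  have key2 : ((g 0 * (Real.cos θ₁ * Real.sin θ₁) : ℝ) : ℂ)
      + ((g 1 * (Real.cos θ₂ * Real.sin θ₂) : ℝ) : ℂ) * z = 0 := by
    exact_mod_cast key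
  have him := congrArg Complex.im key2
  have hre := congrArg Complex.re key2
  simp only [Complex.add_im, Complex.mul_im, Complex.mul_re, Complex.add_re,
    Complex.ofReal_im, Complex.ofReal_re, Complex.zero_im, Complex.zero_re,
    mul_zero, zero_mul, add_zero, zero_add, sub_zero] at him hre
  have hg1 : g 1 = 0 := by
    by_contra hg1
    exact (mul_ne_zero (mul_ne_zero hg1 (by positivity : Real.cos θ₂ * Real.sin θ₂ ≠ 0)) hph) him
  have hg0 : g 0 = 0 := by
    rw [hg1] at hre
    simp only [zero_mul, add_zero] at hre
    rcases mul_eq_zero.mp hre with h | h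
    · exact h
    · nlinarith
  have hg2 : g 2 = 0 := by
    rw [hg0, hg1] at e00
    simpa using e00
  have hg3 : g 3 = 0 := by
    rw [hg0, hg1] at e11
    simpa using e11
  intro i
  fin_cases i <;> assumption
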